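/- With A_i^[k] = ∏_{s:(i,s)∈Ω_k} p_{i,s} and B_j^[k] = ∏_{s:(s,j)∈Ω_k} p_{s,j} for an injective prime indexing p on Ω_k, one has gcd(A_i^[k], B_j^[k]) = p_{i,j} if max(1,|i|)·max(1,|j|) ≤ k, and gcd(A_i^[k], B_j^[k]) = 1 otherwise. -/

import Mathlib

/-- Ω_k as a finite set of lattice points. -/
noncomputable def OmegaF (k : ℕ) : Finset (ℤ × ℤ) :=
  (Finset.Icc (-(k : ℤ), -(k : ℤ)) ((k : ℤ), (k : ℤ))).filter
    (fun p => max 1 |p.1| * max 1 |p.2| ≤ (k : ℤ))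

/-- A_i^[k] = ∏_{s : (i,s) ∈ Ω_k} p_{i,s}. -/
noncomputable def A (k : ℕ) (p : ℤ × ℤ → ℕ) (i : ℤ) : ℕ :=
  ∏ s ∈ (Finset.Icc (-(k : ℤ)) (k : ℤ)).filter (fun s => max 1 |i| * max 1 |s| ≤ (k : ℤ)),
    p (i, s)

/-- B_j^[k] = ∏_{s : (s,j) ∈ Ω_k} p_{s,j}. -/
noncomputable def B (k : ℕ) (p : ℤ × ℤ → ℕ) (j : ℤ) : ℕ :=
  ∏ s ∈ (Finset.Icc (-(k : ℤ)) (k : ℤ)).filter (fun s => max 1 |s| * max 1 |j| ≤ (k : ℤ)),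
    p (s, j)

/-- P_k = ∏_{(i,j) ∈ Ω_k} p_{i,j}. -/
noncomputable def P (k : ℕ) (p : ℤ × ℤ → ℕ) : ℕ := ∏ q ∈ OmegaF k, p q

lemma mem_OmegaF' {k : ℕ} {a b : ℤ} :
    (a, b) ∈ OmegaF k ↔
      a ∈ Finset.Icc (-(k : ℤ)) (k : ℤ) ∧ b ∈ Finset.Icc (-(k : ℤ)) (k : ℤ) ∧
        max 1 |a| * max 1 |b| ≤ (k : ℤ) := by
  simp [OmegaF, Finset.mem_filter, Finset.mem_Icc, Prod.le_def]
  tauto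

/-- gcd(A_i^[k], B_j^[k]) = p_{i,j} if max(1,|i|)·max(1,|j|) ≤ k, and = 1 otherwise. -/
theorem A_B_gcd (k : ℕ) (hk : 1 ≤ k) (p : ℤ × ℤ → ℕ)
    (hprime : ∀ q ∈ OmegaF k, (p q).Prime)
    (hinj : Set.InjOn p (OmegaF k))
    (i j : ℤ) (hi : i ∈ Finset.Icc (-(k : ℤ)) (k : ℤ))
    (hj : j ∈ Finset.Icc (-(k : ℤ)) (k : ℤ)) :
    (max 1 |i| * max 1 |j| ≤ (k : ℤ) → Nat.gcd (A k p i) (B k p j) = p (i, j)) ∧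
    (¬ (max 1 |i| * max 1 |j| ≤ (k : ℤ)) → Nat.gcd (A k p i) (B k p j) = 1) := by
  set SA := (Finset.Icc (-(k : ℤ)) (k : ℤ)).filter
      (fun s => max 1 |i| * max 1 |s| ≤ (k : ℤ)) with hSA
  set SB := (Finset.Icc (-(k : ℤ)) (k : ℤ)).filter
      (fun s => max 1 |s| * max 1 |j| ≤ (k : ℤ)) with hSB
  -- all A-factors are over points of Ω_k
  have hAmem : ∀ s ∈ SA, (i, s) ∈ OmegaF k := by
    intro s hs
    rw [Finset.mem_filter] at hs
    exact mem_OmegaF'.2 ⟨hi, hs.1, hs.2⟩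
  have hBmem : ∀ s ∈ SB, (s, j) ∈ OmegaF k := by
    intro s hs
    rw [Finset.mem_filter] at hs
    exact mem_OmegaF'.2 ⟨hs.1, hj, hs.2⟩
  -- distinct points give coprime primes
  have hcop : ∀ q₁ ∈ OmegaF k, ∀ q₂ ∈ OmegaF k, q₁ ≠ q₂ → Nat.Coprime (p q₁) (p q₂) := by
    intro q₁ h₁ q₂ h₂ hne
    rw [Nat.coprime_primes (hprime _ h₁) (hprime _ h₂)]
    intro heq
    exact hne (hinj h₁ h₂ heq)
  constructor
  · intro hcond
    have hjSA : j ∈ SA := Finset.mem_filter.2 ⟨hj, hcond⟩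
    have hiSB : i ∈ SB := Finset.mem_filter.2 ⟨hi, hcond⟩
    have hA : A k p i = p (i, j) * ∏ s ∈ SA.erase j, p (i, s) :=
      (Finset.mul_prod_erase SA _ hjSA).symm
    have hB : B k p j = p (i, j) * ∏ s ∈ SB.erase i, p (s, j) :=
      (Finset.mul_prod_erase SB _ hiSB).symm
    rw [hA, hB, Nat.gcd_mul_left]
    have hone : Nat.gcd (∏ s ∈ SA.erase j, p (i, s)) (∏ s ∈ SB.erase i, p (s, j)) = 1 := by
      apply Nat.Coprime.prod_left
      intro s hs
      apply Nat.Coprime.prod_right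
      intro t ht
      have hs' := Finset.mem_erase.1 hs
      have ht' := Finset.mem_erase.1 ht
      exact hcop _ (hAmem s hs'.2) _ (hBmem t ht'.2) (by
        intro h
        exact hs'.1 (congrArg Prod.snd h))
    rw [hone, mul_one]
  · intro hcond
    apply Nat.Coprime.prod_left
    intro s hs
    apply Nat.Coprime.prod_right
    intro t ht
    refine hcop _ (hAmem s hs) _ (hBmem t ht) ?_
    intro h
    have h1 : s = j := congrArg Prod.snd h
    subst h1
    exact hcond (Finset.mem_filter.1 hs).2
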